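/- For any finite-valued random variables X₁, …, Xₙ on a common probability space, DTC(X₁;…;Xₙ) = ∑_{i=1}^n I(Xᵢ ; X_{[n]∖i} | X_{[i-1]}), where X_{[i-1]} = (X₁,…,X_{i-1}) (the i = 1 term being the unconditional mutual information I(X₁ ; X_{[n]∖1})). -/
import Mathlib


open MeasureTheory Real

namespace Corr

variable {Ω : Type*} [MeasurableSpace Ω]

/-- Shannon entropy of a finite-valued random variable. -/
noncomputable def shEnt {K : Type*} [Fintype K] (μ : Measure Ω) (X : Ω → K) : ℝ :=
  ∑ k : K, Real.negMulLog ((μ (X ⁻¹' {k})).toReal)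

/-- Conditional Shannon entropy `H(X | Y)`. -/
noncomputable def condEnt {K L : Type*} [Fintype K] [Fintype L]
    (μ : Measure Ω) (X : Ω → K) (Y : Ω → L) : ℝ :=
  shEnt μ (fun ω => (X ω, Y ω)) - shEnt μ Y

/-- Mutual information `I(X ; Y)`. -/
noncomputable def mutInfo {K L : Type*} [Fintype K] [Fintype L]
    (μ : Measure Ω) (X : Ω → K) (Y : Ω → L) : ℝ :=
  shEnt μ X + shEnt μ Y - shEnt μ (fun ω => (X ω, Y ω))

/-- Conditional mutual information `I(X ; Y | Z)`. -/
noncomputable def condMutInfo {K L M : Type*} [Fintype K] [Fintype L] [Fintype M]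
    (μ : Measure Ω) (X : Ω → K) (Y : Ω → L) (Z : Ω → M) : ℝ :=
  condEnt μ X Z + condEnt μ Y Z - condEnt μ (fun ω => (X ω, Y ω)) Z

/-- The joint random variable of a family of random variables. -/
def joint {ι : Type*} {K : ι → Type*} (X : ∀ i, Ω → K i) : Ω → ∀ i, K i :=
  fun ω i => X i ω

/-- Total correlation `TC(X₁;…;Xₙ)`. -/
noncomputable def TC {ι : Type*} [Fintype ι] [DecidableEq ι] {K : ι → Type*}
    [∀ i, Fintype (K i)] (μ : Measure Ω) (X : ∀ i, Ω → K i) : ℝ :=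
  (∑ i, shEnt μ (X i)) - shEnt μ (joint X)

/-- Dual total correlation `DTC(X₁;…;Xₙ)`. -/
noncomputable def DTC {ι : Type*} [Fintype ι] [DecidableEq ι] {K : ι → Type*}
    [∀ i, Fintype (K i)] (μ : Measure Ω) (X : ∀ i, Ω → K i) : ℝ :=
  shEnt μ (joint X) - ∑ i, condEnt μ (X i) (joint fun j : {j : ι // j ≠ i} => X j.1)

/-- Conditional total correlation `TC(X₁;…;Xₙ | Y)`. -/
noncomputable def condTC {ι : Type*} [Fintype ι] [DecidableEq ι] {K : ι → Type*}
    [∀ i, Fintype (K i)] {L : Type*} [Fintype L]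
    (μ : Measure Ω) (X : ∀ i, Ω → K i) (Y : Ω → L) : ℝ :=
  (∑ i, condEnt μ (X i) Y) - condEnt μ (joint X) Y

/-- Conditional dual total correlation `DTC(X₁;…;Xₙ | Y)`. -/
noncomputable def condDTC {ι : Type*} [Fintype ι] [DecidableEq ι] {K : ι → Type*}
    [∀ i, Fintype (K i)] {L : Type*} [Fintype L]
    (μ : Measure Ω) (X : ∀ i, Ω → K i) (Y : Ω → L) : ℝ :=
  condEnt μ (joint X) Y -
    ∑ i, condEnt μ (X i)
      (fun ω => (joint (fun j : {j : ι // j ≠ i} => X j.1) ω, Y ω))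

lemma shEnt_comp_inj {K L : Type*} [Fintype K] [Fintype L] (μ : Measure Ω)
    (X : Ω → K) (e : K → L) (he : Function.Injective e) :
    shEnt μ (fun ω => e (X ω)) = shEnt μ X := by
  classical
  unfold shEnt
  have hzero : ∀ l ∈ (Finset.univ : Finset L), l ∉ Finset.image e Finset.univ →
      Real.negMulLog ((μ ((fun ω => e (X ω)) ⁻¹' {l})).toReal) = 0 := by
    intro l _ hl
    have h : (fun ω => e (X ω)) ⁻¹' {l} = ∅ := by
      ext ω
      simp only [Set.mem_preimage, Set.mem_singleton_iff, Set.mem_empty_iff_false, iff_false]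
      intro h
      exact hl (Finset.mem_image.mpr ⟨X ω, Finset.mem_univ _, h⟩)
    simp [h]
  rw [← Finset.sum_subset (Finset.subset_univ _) hzero,
    Finset.sum_image (fun a _ b _ h => he h)]
  refine Finset.sum_congr rfl fun k _ => ?_
  have h : (fun ω => e (X ω)) ⁻¹' {e k} = X ⁻¹' {k} := by
    ext ω; simp [he.eq_iff]
  rw [h]

lemma shEnt_congr_inj {K L : Type*} [Fintype K] [Fintype L] (μ : Measure Ω)
    (A : Ω → K) (B : Ω → L) (f : K → L) (hf : Function.Injective f)
    (h : ∀ ω, B ω = f (A ω)) : shEnt μ B = shEnt μ A := by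
  have : B = fun ω => f (A ω) := funext h
  rw [this, shEnt_comp_inj μ A f hf]

lemma shEnt_of_unique {K : Type*} [Fintype K] [Unique K]
    (μ : Measure Ω) [IsProbabilityMeasure μ] (Z : Ω → K) : shEnt μ Z = 0 := by
  unfold shEnt
  have h : Z ⁻¹' {(default : K)} = Set.univ := by
    ext ω
    simp only [Set.mem_preimage, Set.mem_singleton_iff, Set.mem_univ, iff_true]
    exact Subsingleton.elim _ _
  rw [Finset.univ_unique, Finset.sum_singleton, h]
  simp

/-- For finite-valued random variables `X₁, …, Xₙ`,
`DTC(X₁;…;Xₙ) = ∑_{i=1}^n I(Xᵢ ; X_{[n]∖i} | X_{[i-1]})`. -/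
theorem dtc_eq_sum_condMutInfo (μ : Measure Ω) [IsProbabilityMeasure μ]
    {n : ℕ} {K : Fin n → Type*} [∀ i, Fintype (K i)]
    [∀ i, MeasurableSpace (K i)] [∀ i, MeasurableSingletonClass (K i)]
    (X : ∀ i, Ω → K i) (hX : ∀ i, Measurable (X i)) :
    DTC μ X = ∑ i : Fin n,
      condMutInfo μ (X i) (joint fun j : {j : Fin n // j ≠ i} => X j.1)
        (joint fun j : {j : Fin n // j < i} => X j.1) := by
  classical
  -- entropy of the first `m` variables
  set g : ℕ → ℝ := fun m => shEnt μ (joint fun j : {j : Fin n // (j : ℕ) < m} => X j.1)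
    with hgdef
  -- abbreviation for entropy of "all but i"
  set h : Fin n → ℝ :=
    fun i => shEnt μ (joint fun j : {j : Fin n // j ≠ i} => X j.1) with hhdef
  -- E1 : H(X i, X_{≠i}) = H(X)
  have E1 : ∀ i : Fin n,
      shEnt μ (fun ω => (X i ω, joint (fun j : {j : Fin n // j ≠ i} => X j.1) ω))
        = shEnt μ (joint X) := by
    intro i
    refine shEnt_congr_inj μ (joint X) _
      (fun x => (x i, fun j : {j : Fin n // j ≠ i} => x j.1)) ?_ (fun ω => rfl)
    intro x y hxy
    funext j
    by_cases hj : j = i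
    · subst hj; exact congrArg Prod.fst hxy
    · exact congrFun (congrArg Prod.snd hxy) ⟨j, hj⟩
  -- E2 : H(X_{≠i}, X_{<i}) = H(X_{≠i})
  have E2 : ∀ i : Fin n,
      shEnt μ (fun ω => (joint (fun j : {j : Fin n // j ≠ i} => X j.1) ω,
        joint (fun j : {j : Fin n // j < i} => X j.1) ω)) = h i := by
    intro i
    refine shEnt_congr_inj μ _ _
      (fun x => (x, fun j : {j : Fin n // j < i} => x ⟨j.1, Fin.ne_of_lt j.2⟩)) ?_
      (fun ω => rfl)
    intro x y hxy
    exact congrArg Prod.fst hxy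
  -- E3 : H((X i, X_{≠i}), X_{<i}) = H(X)
  have E3 : ∀ i : Fin n,
      shEnt μ (fun ω => ((X i ω, joint (fun j : {j : Fin n // j ≠ i} => X j.1) ω),
        joint (fun j : {j : Fin n // j < i} => X j.1) ω)) = shEnt μ (joint X) := by
    intro i
    refine shEnt_congr_inj μ (joint X) _
      (fun x => ((x i, fun j : {j : Fin n // j ≠ i} => x j.1),
        fun j : {j : Fin n // j < i} => x j.1)) ?_ (fun ω => rfl)
    intro x y hxy
    funext j
    by_cases hj : j = i
    · subst hj; exact congrArg Prod.fst (congrArg Prod.fst hxy)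
    · exact congrFun (congrArg Prod.snd (congrArg Prod.fst hxy)) ⟨j, hj⟩
  -- E4 : H(X i, X_{<i}) = g (i+1)
  have E4 : ∀ i : Fin n,
      shEnt μ (fun ω => (X i ω, joint (fun j : {j : Fin n // j < i} => X j.1) ω))
        = g (i.val + 1) := by
    intro i
    refine shEnt_congr_inj μ _ _
      (fun x : ∀ j : {j : Fin n // (j : ℕ) < i.val + 1}, K j.1 =>
        (x ⟨i, Nat.lt_succ_self _⟩,
          fun j : {j : Fin n // j < i} => x ⟨j.1, Nat.lt_succ_of_lt j.2⟩)) ?_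
      (fun ω => rfl)
    intro x y hxy
    funext j
    rcases Nat.lt_succ_iff_lt_or_eq.mp j.2 with hlt | heq
    · exact congrFun (congrArg Prod.snd hxy) ⟨j.1, hlt⟩
    · have hj : j = ⟨i, Nat.lt_succ_self _⟩ := Subtype.ext (Fin.ext heq)
      rw [hj]; exact congrArg Prod.fst hxy
  -- g 0 = 0
  have hg0 : g 0 = 0 := by
    haveI : IsEmpty {j : Fin n // (j : ℕ) < 0} := ⟨fun j => Nat.not_lt_zero _ j.2⟩
    exact shEnt_of_unique μ _
  -- g n = H(X)
  have hgn : g n = shEnt μ (joint X) := by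
    refine shEnt_congr_inj μ (joint X) _
      (fun x => fun j : {j : Fin n // (j : ℕ) < n} => x j.1) ?_ (fun ω => rfl)
    intro x y hxy
    funext j
    exact congrFun hxy ⟨j, j.2⟩
  -- H(X_{<i}) = g i
  have hJl : ∀ i : Fin n,
      shEnt μ (joint fun j : {j : Fin n // j < i} => X j.1) = g i.val := by
    intro i
    refine shEnt_congr_inj μ _ _
      (fun x : ∀ j : {j : Fin n // (j : ℕ) < i.val}, K j.1 =>
        fun j : {j : Fin n // j < i} => x ⟨j.1, j.2⟩) ?_ (fun ω => rfl)
    intro x y hxy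
    funext j
    exact congrFun hxy ⟨j.1, j.2⟩
  -- closed form for each conditional mutual information term
  have key : ∀ i : Fin n,
      condMutInfo μ (X i) (joint fun j : {j : Fin n // j ≠ i} => X j.1)
        (joint fun j : {j : Fin n // j < i} => X j.1)
      = (g (i.val + 1) - g i.val) + (h i - shEnt μ (joint X)) := by
    intro i
    simp only [condMutInfo, condEnt]
    rw [E4 i, E2 i, E3 i, hJl i]
    ring
  -- closed form for DTC
  have hdtc : DTC μ X = shEnt μ (joint X) - ∑ i, (shEnt μ (joint X) - h i) := by
    unfold DTC condEnt
    congr 1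
    refine Finset.sum_congr rfl fun i _ => ?_
    rw [E1 i, hhdef]
  rw [hdtc]
  rw [Finset.sum_congr rfl fun i _ => key i]
  rw [Finset.sum_add_distrib]
  have tel : ∑ i : Fin n, (g (i.val + 1) - g i.val) = shEnt μ (joint X) := by
    rw [Fin.sum_univ_eq_sum_range (fun m => g (m + 1) - g m) n,
      Finset.sum_range_sub, hg0, hgn, sub_zero]
  rw [tel]
  have : ∀ i : Fin n, h i - shEnt μ (joint X) = -(shEnt μ (joint X) - h i) := by
    intro i; ring
  rw [Finset.sum_congr rfl fun i _ => this i, Finset.sum_neg_distrib]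
  ring

end Corr
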